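/- Let A be an n×n matrix of reals such that A is obtained from a Cauchy matrix with a_1 > ... > a_n, b_1 < ... < b_n, all a_i > b_j. Then every square submatrix of A also has positive determinant (A is totally positive). -/

import Mathlib

open Matrix

lemma cauchy_det_pos : ∀ (k : ℕ) (a b : Fin k → ℝ), StrictAnti a → StrictMono b →
    (∀ i j, a i > b j) → 0 < (Matrix.of fun i j : Fin k => 1 / (a i - b j)).det := by
  intro k
  induction k with
  | zero => intro a b _ _ _; simp [Matrix.det_fin_zero]
  | succ k ih =>
    intro a b ha hb hab
    set aL := a (Fin.last k) with haL
    set bL := b (Fin.last k) with hbL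
    have hdpos : ∀ i j : Fin (k+1), 0 < a i - b j := fun i j => sub_pos.2 (hab i j)
    have haLt : ∀ i : Fin k, aL < a i.castSucc :=
      fun i => ha (Fin.castSucc_lt_last i)
    have hbLt : ∀ j : Fin k, b j.castSucc < bL :=
      fun j => hb (Fin.castSucc_lt_last j)
    set A : Matrix (Fin k) (Fin k) ℝ :=
      Matrix.of fun i j => 1 / (a i.castSucc - b j.castSucc) with hA
    set B : Matrix (Fin k) (Fin 1) ℝ :=
      Matrix.of fun i _ => 1 / (a i.castSucc - bL) with hB
    set C : Matrix (Fin 1) (Fin k) ℝ :=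
      Matrix.of fun _ j => 1 / (aL - b j.castSucc) with hC
    set D : Matrix (Fin 1) (Fin 1) ℝ :=
      Matrix.of fun _ _ => 1 / (aL - bL) with hD
    have hdL : (0:ℝ) < aL - bL := hdpos _ _
    letI : Invertible D := by
      refine ⟨Matrix.of fun _ _ => (aL - bL), ?_, ?_⟩ <;>
        · ext i j
          fin_cases i; fin_cases j
          simp [hD, Matrix.mul_apply, Fin.sum_univ_one, hdL.ne']
    have hinvD : (⅟D : Matrix (Fin 1) (Fin 1) ℝ) = Matrix.of fun _ _ => (aL - bL) := rfl
    set M : Matrix (Fin (k+1)) (Fin (k+1)) ℝ :=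
      Matrix.of fun i j => 1 / (a i - b j) with hM
    have hsl : ∀ i : Fin k, finSumFinEquiv.symm i.castSucc = Sum.inl i :=
      fun i => finSumFinEquiv_symm_apply_castAdd i
    have hblock : M = (Matrix.fromBlocks A B C D).submatrix
        finSumFinEquiv.symm finSumFinEquiv.symm := by
      ext i j
      refine Fin.lastCases ?_ ?_ i <;>
        [skip; (intro i')] <;>
      · refine Fin.lastCases ?_ ?_ j <;> [skip; (intro j')] <;>
          simp [hM, hA, hB, hC, hD, Matrix.submatrix_apply, hsl,
            finSumFinEquiv_symm_last, haL, hbL]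
    -- diagonal factors
    set d1 : Fin k → ℝ := fun i => (aL - a i.castSucc) / (a i.castSucc - bL) with hd1
    set d2 : Fin k → ℝ := fun j => (b j.castSucc - bL) / (aL - b j.castSucc) with hd2
    set A' : Matrix (Fin k) (Fin k) ℝ :=
      Matrix.of fun i j : Fin k =>
        1 / ((a ∘ Fin.castSucc) i - (b ∘ Fin.castSucc) j) with hA'
    have hschur : A - B * ⅟D * C =
        Matrix.diagonal d1 * A' * Matrix.diagonal d2 := by
      ext i j
      have h1 : a i.castSucc - b j.castSucc ≠ 0 := (hdpos _ _).ne'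
      have h2 : a i.castSucc - bL ≠ 0 := (hdpos _ _).ne'
      have h3 : aL - b j.castSucc ≠ 0 := (hdpos _ _).ne'
      have hL : (A - B * ⅟D * C) i j = 1/(a i.castSucc - b j.castSucc) -
          1/(a i.castSucc - bL) * (aL - bL) * (1/(aL - b j.castSucc)) := by
        simp [hA, hB, hC, Matrix.sub_apply, Matrix.mul_apply, hinvD, Fin.sum_univ_one]
      have hR : (Matrix.diagonal d1 * A' * Matrix.diagonal d2) i j =
          d1 i * (1/(a i.castSucc - b j.castSucc)) * d2 j := by
        simp [hA', Matrix.mul_diagonal, Matrix.diagonal_mul]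
      rw [hL, hR, hd1, hd2]
      field_simp
      ring
    have hdetA' : 0 < A'.det :=
      ih (a ∘ Fin.castSucc) (b ∘ Fin.castSucc)
        (ha.comp_strictMono Fin.strictMono_castSucc)
        (hb.comp Fin.strictMono_castSucc) (fun i j => hab _ _)
    have hprod : 0 < (∏ i, d1 i) * ∏ i, d2 i := by
      rw [← Finset.prod_mul_distrib]
      refine Finset.prod_pos fun i _ => mul_pos_of_neg_of_neg ?_ ?_
      · exact div_neg_of_neg_of_pos (sub_neg.2 (haLt i)) (hdpos _ _)
      · exact div_neg_of_neg_of_pos (sub_neg.2 (hbLt i)) (hdpos _ _)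
    have : M.det = D.det * ((Matrix.diagonal d1).det * A'.det * (Matrix.diagonal d2).det) := by
      rw [hblock, Matrix.det_submatrix_equiv_self, Matrix.det_fromBlocks₂₂, hschur,
        Matrix.det_mul, Matrix.det_mul]
    rw [this, Matrix.det_diagonal, Matrix.det_diagonal]
    have hdetD : 0 < D.det := by
      rw [Matrix.det_fin_one]; exact one_div_pos.2 hdL
    have : (∏ i, d1 i) * A'.det * (∏ i, d2 i) = ((∏ i, d1 i) * ∏ i, d2 i) * A'.det := by ring
    rw [this]
    exact mul_pos hdetD (mul_pos hprod hdetA')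

/-- A Cauchy matrix `(1/(aᵢ - bⱼ))` with `a` strictly decreasing, `b` strictly
increasing and `aᵢ > bⱼ` for all `i,j` is totally positive: every square
submatrix has positive determinant. -/
theorem stmt_16 (n : ℕ) (a b : Fin n → ℝ)
    (ha : StrictAnti a) (hb : StrictMono b)
    (hab : ∀ i j, a i > b j) :
    ∀ (k : ℕ) (f g : Fin k → Fin n), StrictMono f → StrictMono g →
      0 < ((Matrix.of fun i j : Fin n => 1 / (a i - b j)).submatrix f g).det := by
  intro k f g hf hg
  have h := cauchy_det_pos k (a ∘ f) (b ∘ g) (ha.comp_strictMono hf) (hb.comp hg)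
    (fun i j => hab (f i) (g j))
  exact h
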